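/- Let p ≥ 29 be prime and let B be a finite multiset of elements of Z/pZ of size at least p - √p in which no element occurs with multiplicity ≥ 2p/5. Then B contains a family of at least p/5 - √p pairwise disjoint sub-multisets, each consisting of two distinct elements that are not additive inverses of each other. -/
import Mathlib

open Multiset

/-- size of the class {v, -v} inside C -/
private def cls {p : ℕ} (C : Multiset (ZMod p)) (v : ZMod p) : ℕ :=
  Multiset.card (C.filter (fun x => x = v ∨ x = -v))

private lemma cls_rep {p : ℕ} {C : Multiset (ZMod p)} {a v : ZMod p}
    (h : a = v ∨ a = -v) : cls C a = cls C v := by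
  rcases h with rfl | rfl
  · rfl
  · unfold cls
    congr 1
    apply Multiset.filter_congr
    intro x _
    constructor
    · rintro (rfl | rfl) <;> simp
    · rintro (rfl | rfl) <;> simp

private lemma cls_mono {p : ℕ} {C C' : Multiset (ZMod p)} (h : C' ≤ C) (v : ZMod p) :
    cls C' v ≤ cls C v :=
  Multiset.card_le_card (Multiset.filter_le_filter _ h)

private lemma cls_erase_pos {p : ℕ} {C : Multiset (ZMod p)} {a v : ZMod p}
    (ha : a ∈ C) (h : a = v ∨ a = -v) : cls (C.erase a) v + 1 = cls C v := by
  unfold cls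
  conv_rhs => rw [← Multiset.cons_erase ha]
  rw [Multiset.filter_cons_of_pos (p := fun x => x = v ∨ x = -v) _ h, Multiset.card_cons]

private lemma cls_erase_neg {p : ℕ} {C : Multiset (ZMod p)} {a v : ZMod p}
    (h : ¬(a = v ∨ a = -v)) : cls (C.erase a) v = cls C v := by
  by_cases ha : a ∈ C
  · unfold cls
    conv_rhs => rw [← Multiset.cons_erase ha]
    rw [Multiset.filter_cons_of_neg (p := fun x => x = v ∨ x = -v) _ h]
  · rw [Multiset.erase_of_notMem ha]

private lemma filter_card_add_le {α : Type*} {P Q : α → Prop} [DecidablePred P]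
    [DecidablePred Q] (C : Multiset α) (h : ∀ x, P x → Q x → False) :
    Multiset.card (C.filter P) + Multiset.card (C.filter Q)
      = Multiset.card (C.filter (fun x => P x ∨ Q x)) := by
  rw [← Multiset.card_add, Multiset.filter_add_filter]
  have : C.filter (fun a => P a ∧ Q a) = 0 := by
    rw [Multiset.filter_eq_nil]
    intro x _ hx
    exact (h x hx.1 hx.2).elim
  rw [this, add_zero]

private lemma class_disj {p : ℕ} {a v x : ZMod p} (hPa : ¬(a = v ∨ a = -v))
    (hx : x = a ∨ x = -a) (hv : x = v ∨ x = -v) : False := by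
  apply hPa
  rcases hx with rfl | rfl
  · exact hv
  · rcases hv with h | h
    · right; rw [← h, neg_neg]
    · left; exact neg_inj.mp h

/-- the key greedy extraction lemma -/
private lemma extract_aux {p : ℕ} : ∀ (m : ℕ) (C : Multiset (ZMod p)),
    2 * m ≤ Multiset.card C →
    (∀ v, cls C v + m ≤ Multiset.card C) →
    ∃ f g : Fin m → ZMod p,
      (∀ i, f i ≠ g i ∧ f i + g i ≠ 0) ∧
      (∑ i, ({f i, g i} : Multiset (ZMod p))) ≤ C := by
  intro m
  induction m with
  | zero =>
    intro C _ _
    exact ⟨Fin.elim0, Fin.elim0, fun i => i.elim0, by simp⟩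
  | succ m ih =>
    intro C h2 hcls
    have hCne : C ≠ 0 := by
      intro h; rw [h] at h2; simp at h2
    -- pick a in a class of maximal size
    obtain ⟨a, haF, hamax⟩ := Finset.exists_max_image C.toFinset (cls C)
      (Multiset.toFinset_nonempty.mpr hCne)
    have haC : a ∈ C := Multiset.mem_toFinset.mp haF
    -- the elements outside a's class
    set D := C.filter (fun x => ¬(x = a ∨ x = -a)) with hD
    have hsplit : cls C a + Multiset.card D = Multiset.card C := by
      unfold cls
      rw [← Multiset.card_add, Multiset.filter_add_not]
    have hDne : D ≠ 0 := by
      have := hcls a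
      intro h
      rw [h] at hsplit
      simp at hsplit
      omega
    -- pick b outside a's class with maximal class size among such
    obtain ⟨b, hbF, hbmax⟩ := Finset.exists_max_image D.toFinset (cls C)
      (Multiset.toFinset_nonempty.mpr hDne)
    have hbD : b ∈ D := Multiset.mem_toFinset.mp hbF
    have hbC : b ∈ C := Multiset.mem_of_mem_filter hbD
    have hbn : ¬(b = a ∨ b = -a) := (Multiset.mem_filter.mp hbD).2
    have hba : b ≠ a := fun h => hbn (Or.inl h)
    have hbna : b ≠ -a := fun h => hbn (Or.inr h)
    have hbCa : b ∈ C.erase a := (Multiset.mem_erase_of_ne hba).mpr hbC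
    set C'' := (C.erase a).erase b with hC''
    have hcard'' : Multiset.card C'' + 2 = Multiset.card C := by
      rw [hC'', Multiset.card_erase_of_mem hbCa, Multiset.card_erase_of_mem haC]
      have : 2 ≤ Multiset.card C := by omega
      simp only [Nat.pred_eq_sub_one]
      omega
    have hC''le : C'' ≤ C := le_trans (Multiset.erase_le _ _) (Multiset.erase_le _ _)
    -- verify invariants
    have hinv : ∀ v, cls C'' v + m ≤ Multiset.card C'' := by
      intro v
      by_cases hPa : a = v ∨ a = -v
      · have h1 := cls_erase_pos haC hPa
        have h2' : cls C'' v ≤ cls (C.erase a) v := cls_mono (Multiset.erase_le _ _) v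
        have := hcls v
        omega
      · have hav : cls (C.erase a) v = cls C v := cls_erase_neg hPa
        by_cases hPb : b = v ∨ b = -v
        · have h1 := cls_erase_pos hbCa hPb
          rw [← hC''] at h1
          have h2' : cls (C.erase a) v ≤ cls C v := cls_mono (Multiset.erase_le _ _) v
          have := hcls v
          omega
        · have hbv : cls C'' v = cls (C.erase a) v := by
            rw [hC'']; exact cls_erase_neg hPb
          rw [hbv, hav]
          -- v's class is untouched; show it is not too big
          by_cases hvC : ∃ c ∈ C, c = v ∨ c = -v
          · obtain ⟨c, hcC, hcv⟩ := hvC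
            have hcnab : ¬(c = a ∨ c = -a) := fun h => class_disj hPa h hcv
            have hcD : c ∈ D := Multiset.mem_filter.mpr ⟨hcC, hcnab⟩
            have hcv' : cls C v = cls C c := (cls_rep hcv).symm
            have hcb : cls C c ≤ cls C b := hbmax c (Multiset.mem_toFinset.mpr hcD)
            have hba' : cls C b ≤ cls C a := hamax b (Multiset.mem_toFinset.mpr hbC)
            -- three disjoint classes
            have hdisj1 : ∀ x : ZMod p, (x = a ∨ x = -a) → (x = b ∨ x = -b) → False :=
              fun x ha hb => class_disj hbn hb ha
            have hdisj2 : ∀ x : ZMod p, ((x = a ∨ x = -a) ∨ (x = b ∨ x = -b)) →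
                (x = v ∨ x = -v) → False := by
              rintro x (h | h) hv
              · exact class_disj hPa h hv
              · exact class_disj hPb h hv
            have h3 : cls C a + cls C b + cls C v ≤ Multiset.card C := by
              have t1 : Multiset.card (C.filter (fun x : ZMod p => x = a ∨ x = -a))
                  + Multiset.card (C.filter (fun x : ZMod p => x = b ∨ x = -b))
                  ≤ Multiset.card (C.filter
                      (fun x : ZMod p => (x = a ∨ x = -a) ∨ (x = b ∨ x = -b))) :=
                le_of_eq (filter_card_add_le C hdisj1)
              have t2 : Multiset.card (C.filter
                      (fun x : ZMod p => (x = a ∨ x = -a) ∨ (x = b ∨ x = -b)))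
                  + Multiset.card (C.filter (fun x : ZMod p => x = v ∨ x = -v))
                  ≤ Multiset.card (C.filter (fun x : ZMod p =>
                      ((x = a ∨ x = -a) ∨ (x = b ∨ x = -b)) ∨ (x = v ∨ x = -v))) :=
                le_of_eq (filter_card_add_le C hdisj2)
              have t3 : Multiset.card (C.filter (fun x : ZMod p =>
                  ((x = a ∨ x = -a) ∨ (x = b ∨ x = -b)) ∨ (x = v ∨ x = -v)))
                  ≤ Multiset.card C := Multiset.card_le_card (Multiset.filter_le _ _)
              unfold cls at *
              omega
            rw [hcv'] at *
            omega
          · have : cls C v = 0 := by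
              unfold cls
              rw [Multiset.filter_eq_nil.mpr]
              · rfl
              · intro x hx hx'
                exact hvC ⟨x, hx, hx'⟩
            omega
    have h2'' : 2 * m ≤ Multiset.card C'' := by omega
    obtain ⟨f, g, hfg, hsum⟩ := ih C'' h2'' hinv
    refine ⟨Fin.cons a f, Fin.cons b g, ?_, ?_⟩
    · intro i
      refine Fin.cases ?_ ?_ i
      · constructor
        · simp only [Fin.cons_zero]
          exact fun h => hba h.symm
        · simp only [Fin.cons_zero]
          intro h
          exact hbna (eq_neg_of_add_eq_zero_right h)
      · intro j
        simpa using hfg j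
    · have hC : C = a ::ₘ b ::ₘ C'' := by
        rw [hC'', Multiset.cons_erase hbCa, Multiset.cons_erase haC]
      rw [hC, Fin.sum_univ_succ]
      simp only [Fin.cons_zero, Fin.cons_succ]
      have : ({a, b} : Multiset (ZMod p)) + ∑ i : Fin m, ({f i, g i} : Multiset (ZMod p))
          = a ::ₘ b ::ₘ ∑ i : Fin m, ({f i, g i} : Multiset (ZMod p)) := by
        simp [Multiset.insert_eq_cons]
      rw [this]
      exact Multiset.cons_le_cons a (Multiset.cons_le_cons b hsum)

theorem extract_disjoint_pairs (p : ℕ) (hp : p.Prime) (h29 : 29 ≤ p)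
    (B : Multiset (ZMod p))
    (hcard : (p : ℝ) - Real.sqrt p ≤ (Multiset.card B : ℝ))
    (hmult : ∀ x : ZMod p, (B.count x : ℝ) < 2 * p / 5) :
    ∃ (m : ℕ) (f g : Fin m → ZMod p),
      (p : ℝ) / 5 - Real.sqrt p ≤ (m : ℝ) ∧
      (∀ i, f i ≠ g i ∧ f i + g i ≠ 0) ∧
      (∑ i, ({f i, g i} : Multiset (ZMod p))) ≤ B := by
  haveI : NeZero p := ⟨by omega⟩
  set N := Multiset.card B with hN
  set M := Finset.univ.sup (cls B) with hM
  have hMleN : M ≤ N := by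
    apply Finset.sup_le
    intro v _
    exact Multiset.card_le_card (Multiset.filter_le _ _)
  set m := min (N - M) (N / 2) with hm
  have hforall : ∀ v, cls B v + m ≤ N := by
    intro v
    have h1 : cls B v ≤ M := Finset.le_sup (Finset.mem_univ v)
    have h2 : m ≤ N - M := min_le_left _ _
    omega
  have h2m : 2 * m ≤ N := by
    have : m ≤ N / 2 := min_le_right _ _
    omega
  obtain ⟨f, g, hfg, hsum⟩ := extract_aux m B h2m hforall
  refine ⟨m, f, g, ?_, hfg, hsum⟩
  -- real arithmetic
  have hsqrt : (0:ℝ) ≤ Real.sqrt p := Real.sqrt_nonneg _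
  have hp29 : (29:ℝ) ≤ (p:ℝ) := by exact_mod_cast h29
  -- every class has real size < 4p/5
  have hclsR : ∀ v : ZMod p, (cls B v : ℝ) < 4 * p / 5 := by
    intro v
    have hdec : cls B v ≤ B.count v + B.count (-v) := by
      unfold cls
      have t : Multiset.card (B.filter (fun x : ZMod p => x = v))
          + Multiset.card (B.filter (fun x : ZMod p => x = -v ∧ x ≠ v))
          = Multiset.card (B.filter (fun x : ZMod p => x = v ∨ (x = -v ∧ x ≠ v))) :=
        filter_card_add_le B (by rintro x rfl ⟨_, h⟩; exact h rfl)
      have heq : B.filter (fun x : ZMod p => x = v ∨ x = -v)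
          = B.filter (fun x : ZMod p => x = v ∨ (x = -v ∧ x ≠ v)) := by
        apply Multiset.filter_congr
        intro x _
        by_cases h : x = v <;> simp [h]
      rw [heq]
      have c1 : Multiset.card (B.filter (fun x : ZMod p => x = v)) = B.count v := by
        rw [Multiset.count_eq_card_filter_eq]
        congr 1
        apply Multiset.filter_congr
        intro x _; exact eq_comm
      have c2 : Multiset.card (B.filter (fun x : ZMod p => x = -v ∧ x ≠ v))
          ≤ B.count (-v) := by
        rw [Multiset.count_eq_card_filter_eq]
        apply Multiset.card_le_card
        apply Multiset.monotone_filter_right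
        intro x hx
        exact hx.1.symm
      omega
    have h1 := hmult v
    have h2 := hmult (-v)
    have : (cls B v : ℝ) ≤ (B.count v : ℝ) + (B.count (-v) : ℝ) := by
      exact_mod_cast hdec
    linarith
  have hMR : (M : ℝ) < 4 * p / 5 := by
    obtain ⟨v₀, _, hv₀⟩ := Finset.exists_mem_eq_sup (Finset.univ : Finset (ZMod p))
      ⟨0, Finset.mem_univ 0⟩ (cls B)
    rw [hM, hv₀]
    exact hclsR v₀
  rcases min_cases (N - M) (N / 2) with ⟨hmeq, hle⟩ | ⟨hmeq, hlt⟩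
  · -- m = N - M
    have : (m : ℝ) = (N : ℝ) - (M : ℝ) := by
      rw [hm, hmeq, Nat.cast_sub hMleN]
    rw [this]
    linarith
  · -- m = N / 2
    have hhalf : 2 * (N / 2) + 1 ≥ N := by omega
    have : (2:ℝ) * (m : ℝ) + 1 ≥ (N : ℝ) := by
      rw [hm, hmeq]
      exact_mod_cast hhalf
    linarith
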